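/- Let u, v ∈ [n]* be words. The stalactic tableaux P_stal(u) and P_stal(v) are equal if and only if (1) u and v have the same content, and (2) for all 1 ≤ i < j ≤ n, the statement S_{i,j}(u) holds iff S_{i,j}(v) holds, where S_{i,j}(w) means 'w factors as w'·i·w'' where w'' contains j but not i'. -/

import Mathlib

/-- A stalactic tableau is represented as the list of its columns, from left to
right, each column being a pair (symbol, multiplicity).  Inserting a symbol `a`
adds a new column `(a,1)` on the left if `a` does not yet occur, and otherwise
increments the multiplicity of the column of `a`. -/
def stalInsert {n : ℕ} (T : List (Fin n × ℕ)) (a : Fin n) : List (Fin n × ℕ) :=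
  if T.any (fun col => col.1 = a) then
    T.map (fun col => if col.1 = a then (col.1, col.2 + 1) else col)
  else (a, 1) :: T

/-- The stalactic tableau of a word, computed by inserting its symbols
proceeding right-to-left through the word. -/
def stalTableau {n : ℕ} (w : List (Fin n)) : List (Fin n × ℕ) :=
  w.reverse.foldl stalInsert []

namespace StalAux

variable {α : Type*} [DecidableEq α]

set_option linter.unusedSectionVars false

/-- `i` occurs (somewhere) with `j` occurring strictly later in `L`. -/
def Dp (i j : α) (L : List α) : Prop :=
  ∃ l₁ l₂ : List α, L = l₁ ++ i :: l₂ ∧ j ∈ l₂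

/-- the statement S_{i,j}(w). -/
def Sp (i j : α) (w : List α) : Prop :=
  ∃ w' w'' : List α, w = w' ++ i :: w'' ∧ j ∈ w'' ∧ i ∉ w''

lemma Dp_mem_left {i j : α} {L : List α} (h : Dp i j L) : i ∈ L := by
  obtain ⟨l₁, l₂, rfl, -⟩ := h
  simp

lemma Dp_mem_right {i j : α} {L : List α} (h : Dp i j L) : j ∈ L := by
  obtain ⟨l₁, l₂, rfl, hj⟩ := h
  simp [hj]

lemma Dp_cons {x i j : α} {L : List α} :
    Dp i j (x :: L) ↔ (x = i ∧ j ∈ L) ∨ Dp i j L := by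
  constructor
  · rintro ⟨l₁, l₂, he, hj⟩
    cases l₁ with
    | nil =>
      simp only [List.nil_append, List.cons.injEq] at he
      exact Or.inl ⟨he.1, he.2 ▸ hj⟩
    | cons y t =>
      simp only [List.cons_append, List.cons.injEq] at he
      exact Or.inr ⟨t, l₂, he.2, hj⟩
  · rintro (⟨rfl, hj⟩ | ⟨l₁, l₂, rfl, hj⟩)
    · exact ⟨[], L, rfl, hj⟩
    · exact ⟨x :: l₁, l₂, rfl, hj⟩

lemma not_Dp_both {L : List α} (hL : L.Nodup) {i j : α}
    (h₁ : Dp i j L) (h₂ : Dp j i L) : False := by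
  induction L with
  | nil => exact absurd (Dp_mem_left h₁) (by simp)
  | cons x L ih =>
    have hx : x ∉ L := (List.nodup_cons.mp hL).1
    have hL' : L.Nodup := (List.nodup_cons.mp hL).2
    rcases Dp_cons.mp h₁ with ⟨rfl, hj⟩ | h₁' <;>
      rcases Dp_cons.mp h₂ with ⟨he, hi⟩ | h₂'
    · exact hx (he ▸ hj)
    · exact hx (Dp_mem_right h₂')
    · exact hx (he ▸ Dp_mem_right h₁')
    · exact ih hL' h₁' h₂'

lemma Dp_iff_not {L : List α} (hL : L.Nodup) {i j : α}
    (hi : i ∈ L) (hj : j ∈ L) (hij : i ≠ j) : Dp i j L ↔ ¬ Dp j i L := by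
  constructor
  · exact fun h₁ h₂ => not_Dp_both hL h₁ h₂
  · intro hnot
    induction L with
    | nil => simp at hi
    | cons x L ih =>
      rcases List.mem_cons.mp hi with rfl | hi'
      · have hj' : j ∈ L := by
          rcases List.mem_cons.mp hj with rfl | h
          · exact absurd rfl hij
          · exact h
        exact ⟨[], L, rfl, hj'⟩
      · rcases List.mem_cons.mp hj with rfl | hj'
        · exact absurd ⟨[], L, rfl, hi'⟩ hnot
        · have hnot' : ¬ Dp j i L := fun h => hnot (Dp_cons.mpr (Or.inr h))
          have := ih (List.nodup_cons.mp hL).2 hi' hj' hnot'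
          exact Dp_cons.mpr (Or.inr this)

lemma Sp_cons {x i j : α} {w : List α} :
    Sp i j (x :: w) ↔ (x = i ∧ i ∉ w ∧ j ∈ w) ∨ Sp i j w := by
  constructor
  · rintro ⟨w', w'', he, hj, hi⟩
    cases w' with
    | nil =>
      simp only [List.nil_append, List.cons.injEq] at he
      exact Or.inl ⟨he.1, he.2 ▸ hi, he.2 ▸ hj⟩
    | cons y t =>
      simp only [List.cons_append, List.cons.injEq] at he
      exact Or.inr ⟨t, w'', he.2, hj, hi⟩
  · rintro (⟨rfl, hi, hj⟩ | ⟨w', w'', rfl, hj, hi⟩)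
    · exact ⟨[], w, rfl, hj, hi⟩
    · exact ⟨x :: w', w'', rfl, hj, hi⟩

lemma Sp_iff_Dp_dedup {i j : α} {w : List α} : Sp i j w ↔ Dp i j w.dedup := by
  induction w with
  | nil =>
    simp only [List.dedup_nil]
    constructor
    · rintro ⟨w', w'', he, -⟩
      exact absurd he (by simp)
    · rintro ⟨l₁, l₂, he, -⟩
      exact absurd he (by simp)
  | cons x w ih =>
    by_cases hx : x ∈ w
    · rw [List.dedup_cons_of_mem hx, Sp_cons, ← ih]
      constructor
      · rintro (⟨rfl, hi, -⟩ | h)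
        · exact absurd hx hi
        · exact h
      · exact Or.inr
    · rw [List.dedup_cons_of_notMem hx, Dp_cons, Sp_cons, ← ih, List.mem_dedup]
      constructor
      · rintro (⟨rfl, -, hj⟩ | h)
        · exact Or.inl ⟨rfl, hj⟩
        · exact Or.inr h
      · rintro (⟨rfl, hj⟩ | h)
        · exact Or.inl ⟨rfl, hx, hj⟩
        · exact Or.inr h

/-- A nodup list is determined by its members and pairwise order relations. -/
lemma eq_of_Dp (L M : List α) (hL : L.Nodup) (hM : M.Nodup)
    (hmem : ∀ x, x ∈ L ↔ x ∈ M)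
    (hD : ∀ i j : α, i ≠ j → (Dp i j L ↔ Dp i j M)) : L = M := by
  induction L generalizing M with
  | nil =>
    cases M with
    | nil => rfl
    | cons b M' => exact absurd ((hmem b).mpr (by simp)) (by simp)
  | cons a L' ih =>
    cases M with
    | nil => exact absurd ((hmem a).mp (by simp)) (by simp)
    | cons b M' =>
      have haL' : a ∉ L' := (List.nodup_cons.mp hL).1
      have hbM' : b ∉ M' := (List.nodup_cons.mp hM).1
      have hab : a = b := by
        by_contra hne
        have hbL' : b ∈ L' := by
          rcases List.mem_cons.mp ((hmem b).mpr (by simp)) with h | h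
          · exact absurd h.symm hne
          · exact h
        have haM' : a ∈ M' := by
          rcases List.mem_cons.mp ((hmem a).mp (by simp)) with h | h
          · exact absurd h hne
          · exact h
        have h1 : Dp a b (a :: L') := ⟨[], L', rfl, hbL'⟩
        have h2 : Dp b a (b :: M') := ⟨[], M', rfl, haM'⟩
        exact not_Dp_both hM ((hD a b hne).mp h1) h2
      subst hab
      have hmem' : ∀ x, x ∈ L' ↔ x ∈ M' := by
        intro x
        constructor
        · intro hx
          have hxa : x ≠ a := fun h => haL' (h ▸ hx)
          rcases List.mem_cons.mp ((hmem x).mp (List.mem_cons_of_mem _ hx)) with h | h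
          · exact absurd h hxa
          · exact h
        · intro hx
          have hxa : x ≠ a := fun h => hbM' (h ▸ hx)
          rcases List.mem_cons.mp ((hmem x).mpr (List.mem_cons_of_mem _ hx)) with h | h
          · exact absurd h hxa
          · exact h
      have hD' : ∀ i j : α, i ≠ j → (Dp i j L' ↔ Dp i j M') := by
        intro i j hij
        by_cases hia : i = a
        · subst hia
          constructor
          · intro h; exact absurd (Dp_mem_left h) haL'
          · intro h; exact absurd (Dp_mem_left h) hbM'
        · constructor
          · intro h
            rcases Dp_cons.mp ((hD i j hij).mp (Dp_cons.mpr (Or.inr h))) with ⟨h', -⟩ | h'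
            · exact absurd h'.symm hia
            · exact h'
          · intro h
            rcases Dp_cons.mp ((hD i j hij).mpr (Dp_cons.mpr (Or.inr h))) with ⟨h', -⟩ | h'
            · exact absurd h'.symm hia
            · exact h'
      rw [ih M' (List.nodup_cons.mp hL).2 (List.nodup_cons.mp hM).2 hmem' hD']

end StalAux

lemma stalTableau_cons {n : ℕ} (x : Fin n) (w : List (Fin n)) :
    stalTableau (x :: w) = stalInsert (stalTableau w) x := by
  simp [stalTableau, List.reverse_cons, List.foldl_append]

lemma stalTableau_eq {n : ℕ} (w : List (Fin n)) :
    stalTableau w = w.dedup.map (fun a => (a, w.count a)) := by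
  induction w with
  | nil => rfl
  | cons x w ih =>
    rw [stalTableau_cons, ih]
    by_cases hx : x ∈ w
    · have hany : (w.dedup.map (fun a => (a, w.count a))).any
          (fun col => col.1 = x) = true := by
        rw [List.any_eq_true]
        exact ⟨(x, w.count x), List.mem_map.mpr ⟨x, List.mem_dedup.mpr hx, rfl⟩, by simp⟩
      rw [stalInsert, if_pos hany, List.dedup_cons_of_mem hx, List.map_map]
      refine List.map_eq_map_iff.mpr fun a _ => ?_
      by_cases hax : a = x
      · subst hax
        simp [List.count_cons_self]
      · simp [Function.comp, hax, List.count_cons_of_ne (Ne.symm hax)]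
    · have hany : (w.dedup.map (fun a => (a, w.count a))).any
          (fun col => col.1 = x) = false := by
        rw [List.any_eq_false]
        rintro col hcol
        obtain ⟨a, ha, rfl⟩ := List.mem_map.mp hcol
        simp only [decide_eq_false_iff_not]
        exact fun h => hx ((of_decide_eq_true h) ▸ List.mem_dedup.mp ha)
      rw [stalInsert, if_neg (by rw [hany]; simp), List.dedup_cons_of_notMem hx,
        List.map_cons]
      congr 1
      · simp [List.count_cons_self, List.count_eq_zero.mpr hx]
      · refine List.map_eq_map_iff.mpr fun a ha => ?_
        have hax : a ≠ x := fun h => hx (h ▸ List.mem_dedup.mp ha)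
        simp [List.count_cons_of_ne (Ne.symm hax)]

lemma stalTableau_eq_iff {n : ℕ} (u v : List (Fin n)) :
    stalTableau u = stalTableau v ↔
      u.dedup = v.dedup ∧ ∀ x : Fin n, u.count x = v.count x := by
  rw [stalTableau_eq, stalTableau_eq]
  constructor
  · intro h
    have hd : u.dedup = v.dedup := by
      have := congrArg (List.map Prod.fst) h
      simpa [List.map_map, Function.comp_def] using this
    refine ⟨hd, fun x => ?_⟩
    by_cases hx : x ∈ u
    · rw [hd] at h
      have := List.map_eq_map_iff.mp h x (hd ▸ List.mem_dedup.mpr hx)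
      exact (Prod.mk.injEq _ _ _ _).mp this |>.2
    · have hxv : x ∉ v := fun hv =>
        hx (List.mem_dedup.mp (hd ▸ List.mem_dedup.mpr hv))
      rw [List.count_eq_zero.mpr hx, List.count_eq_zero.mpr hxv]
  · rintro ⟨hd, hc⟩
    rw [hd]
    exact List.map_eq_map_iff.mpr fun a _ => by rw [hc a]

/-- P_stal(u) = P_stal(v) iff u and v have the same content and
for all i < j the statements S_{i,j}(u) and S_{i,j}(v) are equivalent, where
S_{i,j}(w) says that w factors as w'·i·w'' with j occurring in w'' but not i. -/
theorem stmt_8 (n : ℕ) (u v : List (Fin n)) :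
    stalTableau u = stalTableau v ↔
      ((∀ x : Fin n, u.count x = v.count x) ∧
        ∀ i j : Fin n, i < j →
          ((∃ u' u'' : List (Fin n), u = u' ++ i :: u'' ∧ j ∈ u'' ∧ i ∉ u'') ↔
           (∃ v' v'' : List (Fin n), v = v' ++ i :: v'' ∧ j ∈ v'' ∧ i ∉ v''))) := by
  rw [stalTableau_eq_iff]
  constructor
  · rintro ⟨hd, hc⟩
    refine ⟨hc, fun i j _ => ?_⟩
    show StalAux.Sp i j u ↔ StalAux.Sp i j v
    rw [StalAux.Sp_iff_Dp_dedup, StalAux.Sp_iff_Dp_dedup, hd]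
  · rintro ⟨hc, hS⟩
    refine ⟨?_, hc⟩
    have hmem : ∀ x : Fin n, x ∈ u ↔ x ∈ v := by
      intro x
      rw [← List.count_pos_iff, ← List.count_pos_iff, hc x]
    have hS' : ∀ i j : Fin n, i < j →
        (StalAux.Dp i j u.dedup ↔ StalAux.Dp i j v.dedup) := by
      intro i j hij
      rw [← StalAux.Sp_iff_Dp_dedup, ← StalAux.Sp_iff_Dp_dedup]
      exact hS i j hij
    refine StalAux.eq_of_Dp _ _ u.nodup_dedup v.nodup_dedup
      (fun x => by rw [List.mem_dedup, List.mem_dedup]; exact hmem x) ?_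
    intro i j hij
    rcases lt_or_gt_of_ne hij with h | h
    · exact hS' i j h
    · by_cases hi : i ∈ u.dedup
      · by_cases hj : j ∈ u.dedup
        · have hi' : i ∈ v.dedup := by
            rw [List.mem_dedup] at hi ⊢; exact (hmem i).mp hi
          have hj' : j ∈ v.dedup := by
            rw [List.mem_dedup] at hj ⊢; exact (hmem j).mp hj
          rw [StalAux.Dp_iff_not u.nodup_dedup hi hj hij,
            StalAux.Dp_iff_not v.nodup_dedup hi' hj' hij,
            hS' j i h]
        · constructor
          · intro hD
            obtain ⟨l₁, l₂, he, hjm⟩ := hD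
            exact absurd (he ▸ (by simp [hjm] : j ∈ l₁ ++ i :: l₂)) hj
          · intro hD
            obtain ⟨l₁, l₂, he, hjm⟩ := hD
            have : j ∈ v.dedup := he ▸ (by simp [hjm])
            rw [List.mem_dedup] at this hj
            exact absurd ((hmem j).mpr this) hj
      · constructor
        · intro hD; exact absurd (StalAux.Dp_mem_left hD) hi
        · intro hD
          have := StalAux.Dp_mem_left hD
          rw [List.mem_dedup] at this hi
          exact absurd ((hmem i).mpr this) hi
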